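/- Let n ≥ 0 be an integer and let L(n) ⊆ D₀ be the submodule L(n) = W·pʳe + W·pʳf if n = 2r is even and L(n) = W·p^{r+1}e + W·pʳf if n = 2r+1 is odd, regarded as a Dieudonné module with the restrictions of F₀ and V₀. Then for every admissible filtration Fil ⊆ D₀, the submodule Fil ∩ L(n) is an admissible filtration of (L(n), F₀|_{L(n)}, V₀|_{L(n)}) if and only if n is even. -/

import Mathlib

noncomputable section

open Pointwise

/-- `k`, an algebraic closure of the field `𝔽_p` with `p` elements. -/
abbrev Kbar (p : ℕ) [Fact p.Prime] : Type _ := AlgebraicClosure (ZMod p)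

/-- `W = W(k)`, the ring of Witt vectors with coefficients in `k`. -/
abbrev Wt (p : ℕ) [Fact p.Prime] : Type _ := WittVector p (Kbar p)

/-- `σ : W → W`, the Witt vector Frobenius automorphism, lifting the `p`-th power map on `k`. -/
def σW (p : ℕ) [Fact p.Prime] : Wt p ≃+* Wt p := WittVector.frobeniusEquiv p (Kbar p)

/-- The Dieudonné module `D₀`, free of rank 2 over `W` with basis `e = (1,0)`, `f = (0,1)`. -/
abbrev D0 (p : ℕ) [Fact p.Prime] : Type _ := Wt p × Wt p

/-- The Frobenius `F₀` of `D₀`: `F₀ e = f`, `F₀ f = p e`, extended `σ`-semilinearly. -/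
def F0 (p : ℕ) [Fact p.Prime] : D0 p → D0 p :=
  fun m => ((p : Wt p) * σW p m.2, σW p m.1)

/-- The Verschiebung `V₀` of `D₀`: `V₀ e = f`, `V₀ f = p e`, extended `σ⁻¹`-semilinearly. -/
def V0 (p : ℕ) [Fact p.Prime] : D0 p → D0 p :=
  fun m => ((p : Wt p) * (σW p).symm m.2, (σW p).symm m.1)

/-- `Fil` is an admissible filtration of a Dieudonné module `(D, F, V)` that is free of rank
`2g` over `W`: a `W`-submodule of rank `g` such that `D/Fil` is torsion-free and the image of
`Fil` in `D/pD` equals the kernel of the endomorphism of `D/pD` induced by `F`. -/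
def AdmissibleFil (p : ℕ) [Fact p.Prime] {D : Type*} [AddCommGroup D] [Module (Wt p) D]
    (F : D → D) (g : ℕ) (Fil : Submodule (Wt p) D) : Prop :=
  Module.rank (Wt p) Fil = g ∧
  NoZeroSMulDivisors (Wt p) (D ⧸ Fil) ∧
  ∀ d : D, (∃ m ∈ Fil, ∃ d' : D, d = m + (p : Wt p) • d') ↔ (∃ d' : D, F d = (p : Wt p) • d')

/-- The submodule `L(n) ⊆ D₀`: `L(n) = ⟨pʳe, pʳf⟩` if `n = 2r` is even and
`L(n) = ⟨p^{r+1}e, pʳf⟩` if `n = 2r+1` is odd. -/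
def Ln (p : ℕ) [Fact p.Prime] (n : ℕ) : Submodule (Wt p) (D0 p) :=
  if n % 2 = 0 then
    Submodule.span (Wt p) {((p : Wt p) ^ (n / 2), 0), (0, (p : Wt p) ^ (n / 2))}
  else
    Submodule.span (Wt p) {((p : Wt p) ^ (n / 2 + 1), 0), (0, (p : Wt p) ^ (n / 2))}

/-- `Fil'` is an admissible filtration of the Dieudonné submodule `L ⊆ D` (of rank `2g`,
with the restrictions of `F` and `V`): `Fil' ⊆ L` is a rank-`g` submodule, the quotient
`L/Fil'` is torsion-free, and the image of `Fil'` in `L/pL` equals the kernel of the map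
induced by `F` on `L/pL`. -/
def AdmissibleFilIn (p : ℕ) [Fact p.Prime] {D : Type*} [AddCommGroup D] [Module (Wt p) D]
    (L : Submodule (Wt p) D) (F : D → D) (g : ℕ) (Fil : Submodule (Wt p) D) : Prop :=
  Fil ≤ L ∧
  Module.rank (Wt p) Fil = g ∧
  (∀ a : Wt p, a ≠ 0 → ∀ m ∈ L, a • m ∈ Fil → m ∈ Fil) ∧
  ∀ d ∈ L, ((∃ m ∈ Fil, ∃ d' ∈ L, d = m + (p : Wt p) • d') ↔
    (∃ d' ∈ L, F d = (p : Wt p) • d'))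


section Aux

variable {p : ℕ} [Fact p.Prime]

lemma wt_irred : Irreducible (p : Wt p) := WittVector.irreducible p

lemma wt_p_ne_zero : (p : Wt p) ≠ 0 := (wt_irred).ne_zero

lemma σW_pow_mul (r : ℕ) (x : Wt p) :
    σW p ((p : Wt p) ^ r * x) = (p : Wt p) ^ r * σW p x := by
  rw [map_mul, map_pow, map_natCast]

lemma F0_pow_smul (r : ℕ) (d : D0 p) :
    F0 p ((p : Wt p) ^ r • d) = (p : Wt p) ^ r • F0 p d := by
  obtain ⟨x, y⟩ := d
  simp only [F0, Prod.smul_mk, smul_eq_mul, σW_pow_mul]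
  exact Prod.ext (by ring) rfl

lemma mem_Ln_even {n : ℕ} (hn : n % 2 = 0) (d : D0 p) :
    d ∈ Ln p n ↔ ∃ d₀ : D0 p, d = (p : Wt p) ^ (n / 2) • d₀ := by
  rw [Ln, if_pos hn, Submodule.mem_span_pair]
  constructor
  · rintro ⟨a, b, rfl⟩
    exact ⟨(a, b), by simp [Prod.ext_iff, mul_comm]⟩
  · rintro ⟨⟨a, b⟩, rfl⟩
    exact ⟨a, b, by simp [Prod.ext_iff, mul_comm]⟩

lemma mem_Ln_odd {n : ℕ} (hn : n % 2 = 1) (d : D0 p) :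
    d ∈ Ln p n ↔ ∃ a b : Wt p,
      d = ((p : Wt p) ^ (n / 2 + 1) * a, (p : Wt p) ^ (n / 2) * b) := by
  have : ¬ n % 2 = 0 := by omega
  rw [Ln, if_neg this, Submodule.mem_span_pair]
  constructor
  · rintro ⟨a, b, rfl⟩
    exact ⟨a, b, by simp [Prod.ext_iff, mul_comm]⟩
  · rintro ⟨a, b, rfl⟩
    exact ⟨a, b, by simp [Prod.ext_iff, mul_comm]⟩

/-- Every element of an admissible filtration of `D₀` has first coordinate divisible by `p`. -/
lemma fil_fst {Fil : Submodule (Wt p) (D0 p)} (hFil : AdmissibleFil p (F0 p) 1 Fil)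
    {m : D0 p} (hm : m ∈ Fil) : ∃ x : Wt p, m.1 = (p : Wt p) * x := by
  obtain ⟨d', hd'⟩ := (hFil.2.2 m).mp ⟨m, hm, 0, by simp⟩
  have h2 : σW p m.1 = (p : Wt p) * d'.2 := congrArg Prod.snd hd'
  refine ⟨(σW p).symm d'.2, ?_⟩
  have := congrArg (σW p).symm h2
  rwa [RingEquiv.symm_apply_apply, map_mul, map_natCast] at this

end Aux

/-- for every admissible filtration `Fil ⊆ D₀`, the submodule `Fil ∩ L(n)` is an
admissible filtration of `(L(n), F₀|_{L(n)}, V₀|_{L(n)})` if and only if `n` is even. -/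
theorem statement1 (p : ℕ) [Fact p.Prime] (hp : Odd p) (n : ℕ)
    (Fil : Submodule (Wt p) (D0 p)) (hFil : AdmissibleFil p (F0 p) 1 Fil) :
    AdmissibleFilIn p (Ln p n) (F0 p) 1 (Fil ⊓ Ln p n) ↔ Even n := by
  have hirr := wt_irred (p := p)
  obtain ⟨hrank, hnzd, hMod⟩ := hFil
  -- torsion-freeness of D₀/Fil, in usable form
  have key : ∀ (a : Wt p), a ≠ 0 → ∀ m₀ : D0 p, a • m₀ ∈ Fil → m₀ ∈ Fil := by
    intro a ha m₀ hm
    have h0 : a • (Submodule.Quotient.mk m₀ : D0 p ⧸ Fil) = 0 := by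
      rw [← Submodule.Quotient.mk_smul, Submodule.Quotient.mk_eq_zero]
      exact hm
    rcases hnzd.eq_zero_or_eq_zero_of_smul_eq_zero h0 with h | h
    · exact absurd h ha
    · rwa [Submodule.Quotient.mk_eq_zero] at h
  have hpr : ∀ r : ℕ, ((p : Wt p) ^ r : Wt p) ≠ 0 := fun r => pow_ne_zero r wt_p_ne_zero
  have hcancel : ∀ (r : ℕ) (a b : D0 p), (p : Wt p) ^ r • a = (p : Wt p) ^ r • b → a = b := by
    intro r a b hab
    have h1 : (p : Wt p) ^ r * a.1 = (p : Wt p) ^ r * b.1 := congrArg Prod.fst hab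
    have h2 : (p : Wt p) ^ r * a.2 = (p : Wt p) ^ r * b.2 := congrArg Prod.snd hab
    exact Prod.ext (mul_left_cancel₀ (hpr r) h1) (mul_left_cancel₀ (hpr r) h2)
  constructor
  · -- if admissible then n is even
    intro h
    by_contra hodd
    rw [Nat.even_iff] at hodd
    have hn : n % 2 = 1 := by omega
    set r := n / 2 with hr
    -- find m ∈ Fil with unit second coordinate
    have hf : ((0 : Wt p), (1 : Wt p)) = ((0 : Wt p), (1 : Wt p)) := rfl
    obtain ⟨m, hm, d', hd'⟩ := (hMod ((0 : Wt p), (1 : Wt p))).mpr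
      ⟨((1 : Wt p), 0), by simp [F0, Prod.ext_iff]⟩
    have hm1 : (0 : Wt p) = m.1 + (p : Wt p) * d'.1 := congrArg Prod.fst hd'
    have hm2 : (1 : Wt p) = m.2 + (p : Wt p) * d'.2 := congrArg Prod.snd hd'
    -- d := p^r • m lies in Fil ⊓ L(n)
    set d : D0 p := (p : Wt p) ^ r • m with hd
    have hdL : d ∈ Ln p n := by
      rw [mem_Ln_odd hn]
      refine ⟨-d'.1, m.2, ?_⟩
      have : m.1 = (p : Wt p) * (-d'.1) := by linear_combination -hm1
      simp only [hd, Prod.smul_def, smul_eq_mul]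
      refine Prod.ext ?_ rfl
      show (p : Wt p) ^ r * m.1 = (p : Wt p) ^ (r + 1) * (-d'.1)
      rw [this]; ring
    have hdFil : d ∈ Fil := Submodule.smul_mem _ _ hm
    obtain ⟨d'', hd''L, heq⟩ := (h.2.2.2 d hdL).mp
      ⟨d, ⟨hdFil, hdL⟩, 0, Submodule.zero_mem _, by simp⟩
    obtain ⟨a, b, hab⟩ := (mem_Ln_odd hn d'').mp hd''L
    -- first coordinate of F₀ d = p • d''
    have hF : F0 p d = (p : Wt p) ^ r • F0 p m := F0_pow_smul r m
    have h1 : (p : Wt p) ^ r * ((p : Wt p) * σW p m.2)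
        = (p : Wt p) * ((p : Wt p) ^ (r + 1) * a) := by
      have := congrArg Prod.fst heq
      rw [hF, hab] at this
      simpa [F0, Prod.smul_def] using this
    have h2 : σW p m.2 = (p : Wt p) * a := by
      apply mul_left_cancel₀ (hpr (r + 1))
      calc (p : Wt p) ^ (r + 1) * σW p m.2
          = (p : Wt p) ^ r * ((p : Wt p) * σW p m.2) := by ring
        _ = (p : Wt p) * ((p : Wt p) ^ (r + 1) * a) := h1
        _ = (p : Wt p) ^ (r + 1) * ((p : Wt p) * a) := by ring
    have hm2' : m.2 = (p : Wt p) * (σW p).symm a := by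
      have := congrArg (σW p).symm h2
      rwa [RingEquiv.symm_apply_apply, map_mul, map_natCast] at this
    have hunit : IsUnit (p : Wt p) := by
      apply IsUnit.of_mul_eq_one ((σW p).symm a + d'.2)
      rw [mul_add, ← hm2']
      linear_combination -hm2
    exact hirr.not_isUnit hunit
  · -- if n is even then admissible
    intro hev
    have hn : n % 2 = 0 := Nat.even_iff.mp hev
    set r := n / 2 with hr
    set q : Wt p := (p : Wt p) ^ r with hq
    have hq0 : q ≠ 0 := hpr r
    have memL : ∀ d : D0 p, d ∈ Ln p n ↔ ∃ d₀ : D0 p, d = q • d₀ := fun d => mem_Ln_even hn d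
    have qmemL : ∀ d₀ : D0 p, q • d₀ ∈ Ln p n := fun d₀ => (memL _).mpr ⟨d₀, rfl⟩
    refine ⟨inf_le_right, ?_, ?_, ?_⟩
    · -- rank
      have hbij : Function.Bijective
          (fun (m : Fil) => (⟨q • (m : D0 p),
            ⟨Submodule.smul_mem _ _ m.2, qmemL _⟩⟩ : ↥(Fil ⊓ Ln p n))) := by
        constructor
        · intro m₁ m₂ h12
          have : q • (m₁ : D0 p) = q • (m₂ : D0 p) := congrArg Subtype.val h12
          exact Subtype.ext (hcancel r _ _ this)
        · rintro ⟨d, hdFil, hdL⟩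
          obtain ⟨d₀, rfl⟩ := (memL d).mp hdL
          exact ⟨⟨d₀, key q hq0 d₀ hdFil⟩, rfl⟩
      let φ : Fil →ₗ[Wt p] ↥(Fil ⊓ Ln p n) :=
        { toFun := fun m => ⟨q • (m : D0 p), ⟨Submodule.smul_mem _ _ m.2, qmemL _⟩⟩
          map_add' := fun a b => Subtype.ext (by simp [smul_add])
          map_smul' := fun c a => Subtype.ext (by simp [smul_comm q c]) }
      have := (LinearEquiv.ofBijective φ hbij).rank_eq
      rw [← this, hrank]
    · -- torsion-free quotient
      intro a ha m hmL ham
      exact ⟨key a ha m ham.1, hmL⟩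
    · -- the mod-p condition
      intro d hdL
      obtain ⟨d₀, rfl⟩ := (memL d).mp hdL
      constructor
      · rintro ⟨m, ⟨hmFil, hmL⟩, d', hd'L, hsum⟩
        obtain ⟨m₀, rfl⟩ := (memL m).mp hmL
        obtain ⟨e₀, rfl⟩ := (memL d').mp hd'L
        have hm₀ : m₀ ∈ Fil := key q hq0 m₀ hmFil
        have hd₀ : d₀ = m₀ + (p : Wt p) • e₀ := by
          apply hcancel r
          rw [hsum, smul_add, smul_comm]
        obtain ⟨f₀, hf₀⟩ := (hMod d₀).mp ⟨m₀, hm₀, e₀, hd₀⟩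
        refine ⟨q • f₀, qmemL _, ?_⟩
        rw [F0_pow_smul, hf₀, smul_comm]
      · rintro ⟨d', hd'L, heq⟩
        obtain ⟨e, rfl⟩ := (memL d').mp hd'L
        have hFd : F0 p d₀ = (p : Wt p) • e := by
          apply hcancel r
          rw [← F0_pow_smul, heq, smul_comm]
        obtain ⟨m₀, hm₀, d'', hd''⟩ := (hMod d₀).mpr ⟨e, hFd⟩
        refine ⟨q • m₀, ⟨Submodule.smul_mem _ _ hm₀, qmemL _⟩, q • d'', qmemL _, ?_⟩
        rw [hd'', smul_add, smul_comm]
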